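/- arXiv:2502.05154 — 2 statements merged into one kernel-verified Lean document; each statement's English description precedes it below -/
import Mathlib

section
/- Let E be a Hilbert C*-module over a unital C*-algebra A, and let T, S be bounded adjointable self-adjoint operators on E. For x ∈ E with ⟨x,x⟩ = 1, Δ_x(T)·Δ_x(S) ≥ (1/2)√‖(⟨{T,S}x,x⟩ − {⟨Tx,x⟩,⟨Sx,x⟩})² − (⟨[T,S]x,x⟩ + [⟨Tx,x⟩,⟨Sx,x⟩])²‖ (noncommutative Heisenberg–Robertson–Schrödinger uncertainty principle, norm form). -/
open scoped RightActions

/-- The Hilbert C⋆-module class as it stood in Mathlib of December 2024 (right `A`-action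
through `Aᵐᵒᵖ`); Mathlib's `CStarModule` now uses a left action `SMul A E`. -/
class CStarModuleRight (A E : Type*) [NonUnitalSemiring A] [StarRing A] [Module ℂ A]
    [AddCommGroup E] [Module ℂ E] [PartialOrder A] [SMul Aᵐᵒᵖ E] [Norm A] [Norm E]
    extends Inner A E where
  inner_add_right {x} {y} {z} : inner x (y + z) = inner x y + inner x z
  inner_self_nonneg {x} : 0 ≤ inner x x
  inner_self {x} : inner x x = 0 ↔ x = 0
  inner_op_smul_right {a : A} {x y : E} : inner x (y <• a) = inner x y * a
  inner_smul_right_complex {z : ℂ} {x} {y} : inner x (z • y) = z • inner x y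
  star_inner x y : star (inner x y) = inner y x
  norm_eq_sqrt_norm_inner_self x : ‖x‖ = Real.sqrt ‖inner x x‖

variable {A E : Type*} [CStarAlgebra A] [PartialOrder A] [StarOrderedRing A]
  [AddCommGroup E] [Module ℂ E] [SMul Aᵐᵒᵖ E] [Norm E] [CStarModuleRight A E]

local notation "⟪" x ", " y "⟫" => (inner A x y : A)

namespace CStarModuleRight

attribute [simp] CStarModuleRight.inner_op_smul_right

@[simp]
lemma inner_add_left' {x y z : E} : ⟪x + y, z⟫ = ⟪x, z⟫ + ⟪y, z⟫ := by
  rw [← CStarModuleRight.star_inner, CStarModuleRight.inner_add_right, star_add,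
    CStarModuleRight.star_inner, CStarModuleRight.star_inner]

@[simp]
lemma inner_op_smul_left' {a : A} {x y : E} : ⟪x <• a, y⟫ = star a * ⟪x, y⟫ := by
  rw [← CStarModuleRight.star_inner, CStarModuleRight.inner_op_smul_right, star_mul,
    CStarModuleRight.star_inner]

lemma inner_smul_left_complex' {z : ℂ} {x y : E} : ⟪z • x, y⟫ = star z • ⟪x, y⟫ := by
  rw [← CStarModuleRight.star_inner, CStarModuleRight.inner_smul_right_complex, star_smul,
    CStarModuleRight.star_inner]

lemma inner_smul_right_real' {z : ℝ} {x y : E} : ⟪x, z • y⟫ = z • ⟪x, y⟫ := by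
  have h₁ : z • y = (z : ℂ) • y := by simp
  rw [h₁, CStarModuleRight.inner_smul_right_complex]
  simp

lemma inner_smul_left_real' {z : ℝ} {x y : E} : ⟪z • x, y⟫ = z • ⟪x, y⟫ := by
  have h₁ : z • x = (z : ℂ) • x := by simp
  rw [h₁, inner_smul_left_complex']
  simp

lemma inner_zero_right' {x : E} : ⟪x, (0 : E)⟫ = 0 := by
  have h2 := (CStarModuleRight.inner_add_right (A := A) (x := x) (y := (0 : E)) (z := 0))
  rw [add_zero] at h2
  exact left_eq_add.mp h2

lemma inner_neg_right' {x y : E} : ⟪x, -y⟫ = -⟪x, y⟫ := by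
  have h := (CStarModuleRight.inner_add_right (A := A) (x := x) (y := y) (z := -y))
  rw [add_neg_cancel] at h
  have h0 : ⟪x, (0 : E)⟫ = 0 := by
    have h2 := (CStarModuleRight.inner_add_right (A := A) (x := x) (y := (0 : E)) (z := 0))
    rw [add_zero] at h2
    exact left_eq_add.mp h2
  rw [h0] at h
  exact (neg_eq_of_add_eq_zero_right h.symm).symm

@[simp]
lemma inner_sub_right' {x y z : E} : ⟪x, y - z⟫ = ⟪x, y⟫ - ⟪x, z⟫ := by
  rw [sub_eq_add_neg, CStarModuleRight.inner_add_right, inner_neg_right', ← sub_eq_add_neg]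

@[simp]
lemma inner_sub_left' {x y z : E} : ⟪x - y, z⟫ = ⟪x, z⟫ - ⟪y, z⟫ := by
  rw [← CStarModuleRight.star_inner, inner_sub_right', star_sub,
    CStarModuleRight.star_inner, CStarModuleRight.star_inner]

lemma inner_mul_inner_swap_le' {x y : E} : ⟪y, x⟫ * ⟪x, y⟫ ≤ ‖x‖ ^ 2 • ⟪y, y⟫ := by
  rcases eq_or_ne x 0 with h | h
  · subst h
    have h0 : ⟪(0 : E), y⟫ = 0 := by
      rw [← CStarModuleRight.star_inner, inner_zero_right', star_zero]
    rw [h0, ← CStarModuleRight.star_inner, h0, star_zero, mul_zero]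
    exact smul_nonneg (by positivity) CStarModuleRight.inner_self_nonneg
  · have h₁ : ∀ (a : A),
        (0 : A) ≤ ‖x‖ ^ 2 • (star a * a) - ‖x‖ ^ 2 • (⟪y, x⟫ * a)
                  - ‖x‖ ^ 2 • (star a * ⟪x, y⟫) + ‖x‖ ^ 2 • (‖x‖ ^ 2 • ⟪y, y⟫) := fun a => by
      calc (0 : A) ≤ ⟪x <• a - ‖x‖ ^ 2 • y, x <• a - ‖x‖ ^ 2 • y⟫ := by
                      exact CStarModuleRight.inner_self_nonneg
            _ = star a * ⟪x, x⟫ * a - ‖x‖ ^ 2 • (⟪y, x⟫ * a)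
                  - ‖x‖ ^ 2 • (star a * ⟪x, y⟫) + ‖x‖ ^ 2 • (‖x‖ ^ 2 • ⟪y, y⟫) := by
                      simp only [inner_sub_right', CStarModuleRight.inner_op_smul_right,
                        inner_sub_left', inner_op_smul_left', inner_smul_left_real', sub_mul,
                        smul_mul_assoc, mul_smul_comm, inner_smul_right_real', smul_sub, mul_assoc]
                      abel
            _ ≤ ‖x‖ ^ 2 • (star a * a) - ‖x‖ ^ 2 • (⟪y, x⟫ * a)
                  - ‖x‖ ^ 2 • (star a * ⟪x, y⟫) + ‖x‖ ^ 2 • (‖x‖ ^ 2 • ⟪y, y⟫) := by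
                      gcongr
                      calc _ ≤ ‖⟪x, x⟫‖ • (star a * a) :=
                          CStarAlgebra.star_left_conjugate_le_norm_smul (hb := CStarModuleRight.star_inner x x)
                        _ = (√‖⟪x, x⟫‖) ^ 2 • (star a * a) := by
                          rw [Real.sq_sqrt]
                          positivity
                        _ = ‖x‖ ^ 2 • (star a * a) := by
                          rw [← CStarModuleRight.norm_eq_sqrt_norm_inner_self]
    specialize h₁ ⟪x, y⟫
    simp only [CStarModuleRight.star_inner, sub_self, zero_sub, le_neg_add_iff_add_le,
      add_zero] at h₁
    rwa [smul_le_smul_iff_of_pos_left (pow_pos (by rw [CStarModuleRight.norm_eq_sqrt_norm_inner_self (A := A)]; exact Real.sqrt_pos.mpr (norm_pos_iff.mpr fun h' => h ((CStarModuleRight.inner_self (A := A)).mp h'))) _)] at h₁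

lemma norm_inner_le' {x y : E} : ‖⟪x, y⟫‖ ≤ ‖x‖ * ‖y‖ := by
  have := calc ‖⟪x, y⟫‖ ^ 2 = ‖⟪y, x⟫ * ⟪x, y⟫‖ := by
                rw [← CStarModuleRight.star_inner x, CStarRing.norm_star_mul_self, pow_two]
    _ ≤ ‖‖x‖ ^ 2 • ⟪y, y⟫‖ := by
                refine CStarAlgebra.norm_le_norm_of_nonneg_of_le ?_ inner_mul_inner_swap_le'
                rw [← CStarModuleRight.star_inner x]
                exact star_mul_self_nonneg ⟪x, y⟫
    _ = ‖x‖ ^ 2 * ‖⟪y, y⟫‖ := by simp [norm_smul]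
    _ = ‖x‖ ^ 2 * ‖y‖ ^ 2 := by
                simp only [CStarModuleRight.norm_eq_sqrt_norm_inner_self (A := A) (E := E) y,
                  norm_nonneg, Real.sq_sqrt]
    _ = (‖x‖ * ‖y‖) ^ 2 := by simp only [mul_pow]
  refine (pow_le_pow_iff_left₀ (norm_nonneg ⟪x, y⟫) ?_ (by simp)).mp this
  exact mul_nonneg (by rw [CStarModuleRight.norm_eq_sqrt_norm_inner_self (A := A) x]; exact Real.sqrt_nonneg _)
    (by rw [CStarModuleRight.norm_eq_sqrt_norm_inner_self (A := A) y]; exact Real.sqrt_nonneg _)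

end CStarModuleRight

/-- Noncommutative Heisenberg–Robertson–Schrödinger uncertainty principle, norm form. -/
theorem noncommutative_HRS_norm
(T S : E →ₗ[ℂ] E)
    (hTA : ∀ (a : A) (y : E), T (y <• a) = T y <• a)
    (hSA : ∀ (a : A) (y : E), S (y <• a) = S y <• a)
    (hT : ∀ y z : E, ⟪T y, z⟫ = ⟪y, T z⟫) (hS : ∀ y z : E, ⟪S y, z⟫ = ⟪y, S z⟫)
    (hTb : ∃ C : ℝ, ∀ y : E, ‖T y‖ ≤ C * ‖y‖) (hSb : ∃ C : ℝ, ∀ y : E, ‖S y‖ ≤ C * ‖y‖)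
    (x : E) (hx : ⟪x, x⟫ = 1) :
    (1 / 2 : ℝ) * Real.sqrt
      ‖(⟪T (S x) + S (T x), x⟫ - (⟪T x, x⟫ * ⟪S x, x⟫ + ⟪S x, x⟫ * ⟪T x, x⟫)) ^ 2 -
        (⟪T (S x) - S (T x), x⟫ + (⟪T x, x⟫ * ⟪S x, x⟫ - ⟪S x, x⟫ * ⟪T x, x⟫)) ^ 2‖ ≤
      ‖T x - x <• ⟪T x, x⟫‖ * ‖S x - x <• ⟪S x, x⟫‖ := by
  set t : A := ⟪T x, x⟫ with ht
  set s : A := ⟪S x, x⟫ with hs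
  have hts : star t = t := by rw [ht, CStarModuleRight.star_inner, hT]
  have hss : star s = s := by rw [hs, CStarModuleRight.star_inner, hS]
  set u : E := T x - x <• t with hu
  set v : E := S x - x <• s with hv
  set p : A := ⟪u, v⟫ with hp
  -- compute p and star p
  have hxT : ⟪x, T x⟫ = t := by rw [← CStarModuleRight.star_inner, ← ht, hts]
  have hxS : ⟪x, S x⟫ = s := by rw [← CStarModuleRight.star_inner, ← hs, hss]
  have hpval : p = ⟪T x, S x⟫ - t * s := by
    simp [hp, hu, hv, CStarModuleRight.inner_op_smul_left', hts, hxS, hx, mul_sub, sub_mul, ← ht]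
  have hpstar : star p = ⟪S x, T x⟫ - s * t := by
    rw [hp, CStarModuleRight.star_inner, hu, hv]
    simp [CStarModuleRight.inner_op_smul_left', hss, hxT, hx, mul_sub, sub_mul, ← hs]
  -- identify the two brackets
  have h1 : ⟪T (S x) + S (T x), x⟫ - (t * s + s * t) = star p + p := by
    rw [hpstar, hpval]
    have e1 : ⟪T (S x), x⟫ = ⟪S x, T x⟫ := hT _ _
    have e2 : ⟪S (T x), x⟫ = ⟪T x, S x⟫ := hS _ _
    simp only [CStarModuleRight.inner_add_left', e1, e2]
    noncomm_ring
  have h2 : ⟪T (S x) - S (T x), x⟫ + (t * s - s * t) = star p - p := by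
    rw [hpstar, hpval]
    have e1 : ⟪T (S x), x⟫ = ⟪S x, T x⟫ := hT _ _
    have e2 : ⟪S (T x), x⟫ = ⟪T x, S x⟫ := hS _ _
    simp only [CStarModuleRight.inner_sub_left', e1, e2]
    noncomm_ring
  rw [h1, h2]
  have hsq : (star p + p) ^ 2 - (star p - p) ^ 2 = 2 * (star p * p + p * star p) := by noncomm_ring
  rw [hsq]
  have hnorm : ‖(2 : A) * (star p * p + p * star p)‖ ≤ 4 * ‖p‖ ^ 2 := by
    calc ‖(2 : A) * (star p * p + p * star p)‖
        = ‖(star p * p + p * star p) + (star p * p + p * star p)‖ := by rw [two_mul]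
      _ ≤ ‖star p * p + p * star p‖ + ‖star p * p + p * star p‖ := norm_add_le _ _
      _ ≤ (‖star p * p‖ + ‖p * star p‖) + (‖star p * p‖ + ‖p * star p‖) := by
          gcongr <;> exact norm_add_le _ _
      _ = 4 * ‖p‖ ^ 2 := by
          rw [CStarRing.norm_star_mul_self, CStarRing.norm_self_mul_star, sq]; ring
  calc (1 / 2 : ℝ) * Real.sqrt ‖(2 : A) * (star p * p + p * star p)‖
      ≤ (1 / 2 : ℝ) * Real.sqrt (4 * ‖p‖ ^ 2) := by
        have := Real.sqrt_le_sqrt hnorm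
        nlinarith [Real.sqrt_nonneg ‖(2 : A) * (star p * p + p * star p)‖]
    _ = ‖p‖ := by
        rw [show (4 : ℝ) * ‖p‖ ^ 2 = (2 * ‖p‖) ^ 2 by ring,
          Real.sqrt_sq (by positivity)]
        ring
    _ ≤ ‖u‖ * ‖v‖ := CStarModuleRight.norm_inner_le'
end

section
/- Let E be a Hilbert C*-module over a unital C*-algebra A, and let T, S be bounded adjointable self-adjoint operators on E. For x ∈ E with ⟨x,x⟩ = 1, setting z := Tx − ⟨Tx,x⟩x and w := Sx − ⟨Sx,x⟩x, one has ⟨z,w⟩ + ⟨w,z⟩ = ⟨{T,S}x,x⟩ − {⟨Tx,x⟩,⟨Sx,x⟩} and ⟨z,w⟩ − ⟨w,z⟩ = −(⟨[T,S]x,x⟩ + [⟨Tx,x⟩,⟨Sx,x⟩]). -/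
open scoped RightActions

variable {A E : Type*} [CStarAlgebra A] [PartialOrder A] [StarOrderedRing A]
  [AddCommGroup E] [Module ℂ E] [SMul Aᵐᵒᵖ E] [Norm E] [CStarModuleRight A E]

local notation "⟪" x ", " y "⟫" => (inner A x y : A)

theorem CStarModuleRight.inner_add_left {x y z : E} : ⟪x + y, z⟫ = ⟪x, z⟫ + ⟪y, z⟫ := by
  rw [← CStarModuleRight.star_inner z, CStarModuleRight.inner_add_right, star_add,
    CStarModuleRight.star_inner, CStarModuleRight.star_inner]

theorem CStarModuleRight.inner_neg_right {x y : E} : ⟪x, -y⟫ = -⟪x, y⟫ := by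
  have h : -y = (-1 : ℂ) • y := by simp
  rw [h, CStarModuleRight.inner_smul_right_complex, neg_one_smul]

theorem CStarModuleRight.inner_sub_right {x y z : E} : ⟪x, y - z⟫ = ⟪x, y⟫ - ⟪x, z⟫ := by
  rw [sub_eq_add_neg, CStarModuleRight.inner_add_right, CStarModuleRight.inner_neg_right,
    ← sub_eq_add_neg]

theorem CStarModuleRight.inner_sub_left {x y z : E} : ⟪x - y, z⟫ = ⟪x, z⟫ - ⟪y, z⟫ := by
  rw [← CStarModuleRight.star_inner z, CStarModuleRight.inner_sub_right, star_sub,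
    CStarModuleRight.star_inner, CStarModuleRight.star_inner]

theorem CStarModuleRight.inner_op_smul_left {a : A} {x y : E} :
    ⟪x <• a, y⟫ = star a * ⟪x, y⟫ := by
  rw [← CStarModuleRight.star_inner y, CStarModuleRight.inner_op_smul_right, star_mul,
    CStarModuleRight.star_inner]

/-- The sum and difference identities for the centered vectors. -/
theorem centered_inner_sum_and_diff
(T S : E →ₗ[ℂ] E)
    (hTA : ∀ (a : A) (y : E), T (y <• a) = T y <• a)
    (hSA : ∀ (a : A) (y : E), S (y <• a) = S y <• a)
    (hT : ∀ y z : E, ⟪T y, z⟫ = ⟪y, T z⟫) (hS : ∀ y z : E, ⟪S y, z⟫ = ⟪y, S z⟫)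
    (hTb : ∃ C : ℝ, ∀ y : E, ‖T y‖ ≤ C * ‖y‖) (hSb : ∃ C : ℝ, ∀ y : E, ‖S y‖ ≤ C * ‖y‖)
    (x : E) (hx : ⟪x, x⟫ = 1) :
    ⟪T x - x <• ⟪T x, x⟫, S x - x <• ⟪S x, x⟫⟫ + ⟪S x - x <• ⟪S x, x⟫, T x - x <• ⟪T x, x⟫⟫ =
      ⟪T (S x) + S (T x), x⟫ - (⟪T x, x⟫ * ⟪S x, x⟫ + ⟪S x, x⟫ * ⟪T x, x⟫) ∧
    ⟪T x - x <• ⟪T x, x⟫, S x - x <• ⟪S x, x⟫⟫ - ⟪S x - x <• ⟪S x, x⟫, T x - x <• ⟪T x, x⟫⟫ =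
      -(⟪T (S x) - S (T x), x⟫ + (⟪T x, x⟫ * ⟪S x, x⟫ - ⟪S x, x⟫ * ⟪T x, x⟫)) := by

  have key : ∀ (P Q : E →ₗ[ℂ] E), (∀ y z : E, ⟪P y, z⟫ = ⟪y, P z⟫) →
      (∀ y z : E, ⟪Q y, z⟫ = ⟪y, Q z⟫) →
      ⟪P x - x <• ⟪P x, x⟫, Q x - x <• ⟪Q x, x⟫⟫ = ⟪Q (P x), x⟫ - ⟪P x, x⟫ * ⟪Q x, x⟫ := by
    intro P Q hP hQ
    have hstar : star (⟪P x, x⟫ : A) = ⟪P x, x⟫ := by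
      rw [CStarModuleRight.star_inner, hP]
    have h1 : (⟪P x, Q x⟫ : A) = ⟪Q (P x), x⟫ := by
      rw [hQ (P x) x, ← CStarModuleRight.star_inner, ← hP, CStarModuleRight.star_inner]
    have h2 : (⟪x, Q x⟫ : A) = ⟪Q x, x⟫ := by
      rw [hQ, ← CStarModuleRight.star_inner, hQ]
    rw [CStarModuleRight.inner_sub_left, CStarModuleRight.inner_sub_right, CStarModuleRight.inner_sub_right,
      CStarModuleRight.inner_op_smul_left, CStarModuleRight.inner_op_smul_left,
      CStarModuleRight.inner_op_smul_right, CStarModuleRight.inner_op_smul_right, hx, one_mul, hstar, h1, h2]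
    abel
  rw [key T S hT hS, key S T hS hT]
  refine ⟨?_, ?_⟩ <;> simp only [CStarModuleRight.inner_add_left, CStarModuleRight.inner_sub_left] <;> abel
end
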